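/- Let R be a commutative ring, N ≥ 1, and let ⪯ be a monomial order on the polynomial ring R[x_1,…,x_N] such that the monomial x_i is strictly smaller than x_j whenever i < j. Let u be the R-algebra endomorphism of R[x_1,…,x_N] determined by u(x_j) = x_j + Σ_{i<j} g_{ij} x_i for some scalars g_{ij} ∈ R. Then for every nonzero polynomial f, the polynomial u(f) is nonzero, the ⪯-largest monomial occurring in u(f) equals the ⪯-largest monomial occurring in f, and the leading coefficients of u(f) and f coincide; in short, the initial term of u(f) equals the initial term of f. -/

import Mathlib

open MvPolynomial


section Aux

variable {R : Type*} [CommRing R] {N : ℕ}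
variable {le : (Fin N →₀ ℕ) → (Fin N →₀ ℕ) → Prop}

lemma aux_mul (hlin : IsLinearOrder (Fin N →₀ ℕ) le)
    (hmul : ∀ a b c, le a b → le (a + c) (b + c))
    {a b : Fin N →₀ ℕ} {p q : MvPolynomial (Fin N) R}
    (hp : ∀ d' ∈ p.support, le d' a) (hq : ∀ d' ∈ q.support, le d' b) :
    (∀ d' ∈ (p * q).support, le d' (a + b)) ∧
    (p * q).coeff (a + b) = p.coeff a * q.coeff b := by
  haveI := hlin
  constructor
  · intro d' hd'
    have hmem := MvPolynomial.support_mul p q hd'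
    rw [Finset.mem_add] at hmem
    obtain ⟨x, hx, y, hy, rfl⟩ := hmem
    have h1 : le (x + y) (a + y) := hmul _ _ _ (hp x hx)
    have h2 : le (a + y) (a + b) := by
      have := hmul _ _ a (hq y hy)
      simpa [add_comm] using this
    exact trans_of le h1 h2
  · rw [MvPolynomial.coeff_mul]
    rw [Finset.sum_eq_single (a, b)]
    · intro x hx hne
      rw [Finset.HasAntidiagonal.mem_antidiagonal] at hx
      by_contra hc
      have hx1 : x.1 ∈ p.support := by
        by_contra h
        simp [MvPolynomial.notMem_support_iff.mp h] at hc
      have hx2 : x.2 ∈ q.support := by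
        by_contra h
        simp [MvPolynomial.notMem_support_iff.mp h] at hc
      have e1 : le (x.1 + x.2) (a + x.2) := hmul _ _ _ (hp _ hx1)
      have e2 : le (a + x.2) (x.1 + x.2) := by
        rw [hx]
        simpa [add_comm] using hmul _ _ a (hq _ hx2)
      have e3 : a + x.2 = x.1 + x.2 := antisymm_of le e2 e1
      have e4 : a = x.1 := add_right_cancel e3
      have e5 : b = x.2 := by
        have := hx
        rw [← e4] at this
        exact (add_left_cancel this.symm)
      exact hne (Prod.ext e4.symm e5.symm)
    · intro h
      exact absurd (Finset.HasAntidiagonal.mem_antidiagonal (a := (a, b)).mpr rfl) h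

lemma aux_pow (hlin : IsLinearOrder (Fin N →₀ ℕ) le)
    (hmul : ∀ a b c, le a b → le (a + c) (b + c))
    {a : Fin N →₀ ℕ} {p : MvPolynomial (Fin N) R}
    (hp : ∀ d' ∈ p.support, le d' a) (hc : p.coeff a = 1) (n : ℕ) :
    (∀ d' ∈ (p ^ n).support, le d' (n • a)) ∧ (p ^ n).coeff (n • a) = 1 := by
  haveI := hlin
  induction n with
  | zero =>
    constructor
    · intro d' hd'
      rw [pow_zero] at hd'
      have h0 := MvPolynomial.mem_support_iff.mp hd'
      rw [MvPolynomial.coeff_one] at h0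
      by_cases h : (0 : Fin N →₀ ℕ) = d'
      · rw [← h, zero_smul]
        exact refl_of le 0
      · simp [h] at h0
    · simp
  | succ n ih =>
    have := aux_mul hlin hmul ih.1 hp
    rw [← pow_succ] at this
    constructor
    · intro d' hd'
      rw [succ_nsmul]
      exact this.1 d' hd'
    · rw [succ_nsmul]
      rw [this.2, ih.2, hc, one_mul]

end Aux

section Aux2

variable {R : Type*} [CommRing R] {N : ℕ}
variable {le : (Fin N →₀ ℕ) → (Fin N →₀ ℕ) → Prop}

lemma aux_X (hlin : IsLinearOrder (Fin N →₀ ℕ) le)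
    (hvar : ∀ i j : Fin N, i < j →
      le (Finsupp.single i 1) (Finsupp.single j 1) ∧
      ¬ le (Finsupp.single j 1) (Finsupp.single i 1))
    (g : Fin N → Fin N → R)
    (u : MvPolynomial (Fin N) R →ₐ[R] MvPolynomial (Fin N) R)
    (hu : ∀ j : Fin N, u (X j) =
      X j + ∑ i ∈ Finset.univ.filter (fun i => i < j), C (g i j) * X i)
    (a : Fin N) :
    (∀ d' ∈ (u (X a)).support, le d' (Finsupp.single a 1)) ∧
    (u (X a)).coeff (Finsupp.single a 1) = 1 := by
  haveI := hlin
  rw [hu a]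
  constructor
  · intro d' hd'
    have h0 := MvPolynomial.mem_support_iff.mp hd'
    rw [MvPolynomial.coeff_add] at h0
    by_cases h : d' = Finsupp.single a 1
    · rw [h]; exact refl_of le _
    · by_cases h2 : ∃ i : Fin N, i < a ∧ d' = Finsupp.single i 1
      · obtain ⟨i, hi, rfl⟩ := h2
        exact (hvar i a hi).1
      · push_neg at h2
        exfalso
        apply h0
        rw [MvPolynomial.coeff_X', if_neg (fun hh => h hh.symm)]
        rw [MvPolynomial.coeff_sum, Finset.sum_eq_zero, add_zero]
        intro i hi
        rw [Finset.mem_filter] at hi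
        rw [MvPolynomial.coeff_C_mul, MvPolynomial.coeff_X',
          if_neg (fun hh => h2 i hi.2 hh.symm), mul_zero]
  · rw [MvPolynomial.coeff_add, MvPolynomial.coeff_X', if_pos rfl]
    rw [MvPolynomial.coeff_sum, Finset.sum_eq_zero, add_zero]
    intro i hi
    rw [Finset.mem_filter] at hi
    rw [MvPolynomial.coeff_C_mul, MvPolynomial.coeff_X', if_neg, mul_zero]
    intro hh
    have := Finsupp.single_left_injective (one_ne_zero) hh
    exact absurd (this ▸ hi.2) (lt_irrefl a)

lemma aux_monomial (hlin : IsLinearOrder (Fin N →₀ ℕ) le)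
    (hmul : ∀ a b c, le a b → le (a + c) (b + c))
    (hvar : ∀ i j : Fin N, i < j →
      le (Finsupp.single i 1) (Finsupp.single j 1) ∧
      ¬ le (Finsupp.single j 1) (Finsupp.single i 1))
    (g : Fin N → Fin N → R)
    (u : MvPolynomial (Fin N) R →ₐ[R] MvPolynomial (Fin N) R)
    (hu : ∀ j : Fin N, u (X j) =
      X j + ∑ i ∈ Finset.univ.filter (fun i => i < j), C (g i j) * X i)
    (α : Fin N →₀ ℕ) :
    (∀ d' ∈ (u (monomial α (1 : R))).support, le d' α) ∧
    (u (monomial α (1 : R))).coeff α = 1 := by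
  haveI := hlin
  induction α using Finsupp.induction with
  | zero =>
    rw [show monomial (0 : Fin N →₀ ℕ) (1 : R) = 1 from rfl, map_one]
    constructor
    · intro d' hd'
      have h0 := MvPolynomial.mem_support_iff.mp hd'
      rw [MvPolynomial.coeff_one] at h0
      by_cases h : (0 : Fin N →₀ ℕ) = d'
      · rw [← h]; exact refl_of le 0
      · simp [h] at h0
    · simp
  | single_add a b fr ha hb ih =>
    have hX := aux_X hlin hvar g u hu a
    have hpow := aux_pow hlin hmul hX.1 hX.2 b
    rw [Finsupp.smul_single, smul_eq_mul, mul_one] at hpow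
    have hmono : monomial (Finsupp.single a b + fr) (1 : R)
        = monomial (Finsupp.single a b) 1 * monomial fr 1 := by
      rw [MvPolynomial.monomial_mul, one_mul]
    rw [hmono, map_mul, ← X_pow_eq_monomial, map_pow]
    exact aux_mul hlin hmul hpow.1 ih.1 |>.imp id (fun h => by rw [h, hpow.2, ih.2, one_mul])

lemma aux_max (hlin : IsLinearOrder (Fin N →₀ ℕ) le)
    {s : Finset (Fin N →₀ ℕ)} (hs : s.Nonempty) :
    ∃ m ∈ s, ∀ x ∈ s, le x m := by
  haveI := hlin
  induction s using Finset.induction_on with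
  | empty => exact absurd hs (by simp)
  | @insert a t hnotmem ih =>
    rcases t.eq_empty_or_nonempty with rfl | ht
    · exact ⟨a, by simp, by
        intro x hx
        simp at hx
        rw [hx]; exact refl_of le a⟩
    · obtain ⟨m, hm, hmax⟩ := ih ht
      rcases total_of le a m with h | h
      · exact ⟨m, Finset.mem_insert_of_mem hm, by
          intro x hx
          rcases Finset.mem_insert.mp hx with rfl | hx
          · exact h
          · exact hmax x hx⟩
      · exact ⟨a, Finset.mem_insert_self a t, by
          intro x hx
          rcases Finset.mem_insert.mp hx with rfl | hx
          · exact refl_of le x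
          · exact trans_of le (hmax x hx) h⟩

end Aux2

/-- let `⪯` be a monomial order on `R[x_1, …, x_N]` with `x_i ≺ x_j` for
`i < j`, and let `u` be the `R`-algebra endomorphism with
`u(x_j) = x_j + Σ_{i<j} g i j • x_i`.  Then `u` preserves initial terms: for nonzero `f`,
`u f` is nonzero, the `⪯`-largest monomial of `u f` is that of `f`, and the leading
coefficients agree. -/
theorem initial_term_invariant_under_unipotent
    (R : Type*) [CommRing R] (N : ℕ) (hN : 1 ≤ N)
    (le : (Fin N →₀ ℕ) → (Fin N →₀ ℕ) → Prop)
    (hlin : IsLinearOrder (Fin N →₀ ℕ) le)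
    (hbot : ∀ a, le 0 a)
    (hmul : ∀ a b c, le a b → le (a + c) (b + c))
    (hvar : ∀ i j : Fin N, i < j →
      le (Finsupp.single i 1) (Finsupp.single j 1) ∧
      ¬ le (Finsupp.single j 1) (Finsupp.single i 1))
    (g : Fin N → Fin N → R)
    (u : MvPolynomial (Fin N) R →ₐ[R] MvPolynomial (Fin N) R)
    (hu : ∀ j : Fin N, u (X j) =
      X j + ∑ i ∈ Finset.univ.filter (fun i => i < j), C (g i j) * X i)
    (f : MvPolynomial (Fin N) R) (hf : f ≠ 0) :
    u f ≠ 0 ∧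
    ∀ d : Fin N →₀ ℕ, d ∈ f.support → (∀ d' ∈ f.support, le d' d) →
      d ∈ (u f).support ∧ (∀ d' ∈ (u f).support, le d' d) ∧
      (u f).coeff d = f.coeff d := by
  haveI := hlin
  have hrep : u f = ∑ v ∈ f.support, C (f.coeff v) * u (monomial v 1) := by
    conv_lhs => rw [f.as_sum, map_sum]
    refine Finset.sum_congr rfl fun v _ => ?_
    rw [show (monomial v (f.coeff v) : MvPolynomial (Fin N) R)
        = C (f.coeff v) * monomial v 1 by rw [MvPolynomial.C_mul_monomial, mul_one],
      map_mul]
    congr 1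
    have := u.commutes (f.coeff v)
    rwa [MvPolynomial.algebraMap_eq] at this
  have key : ∀ d : Fin N →₀ ℕ, d ∈ f.support → (∀ d' ∈ f.support, le d' d) →
      d ∈ (u f).support ∧ (∀ d' ∈ (u f).support, le d' d) ∧
      (u f).coeff d = f.coeff d := by
    intro d hd hdmax
    have hcoeff : (u f).coeff d = f.coeff d := by
      rw [hrep, MvPolynomial.coeff_sum]
      rw [Finset.sum_eq_single d]
      · rw [MvPolynomial.coeff_C_mul,
          (aux_monomial hlin hmul hvar g u hu d).2, mul_one]
      · intro v hv hvd
        rw [MvPolynomial.coeff_C_mul]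
        convert mul_zero _
        by_contra hc
        have hmem : d ∈ (u (monomial v (1:R))).support :=
          MvPolynomial.mem_support_iff.mpr hc
        have h1 : le d v := (aux_monomial hlin hmul hvar g u hu v).1 d hmem
        have h2 : le v d := hdmax v hv
        exact hvd (antisymm_of le h2 h1)
      · intro h
        exact absurd hd h
    have hbound : ∀ d' ∈ (u f).support, le d' d := by
      intro d' hd'
      have hne := MvPolynomial.mem_support_iff.mp hd'
      rw [hrep, MvPolynomial.coeff_sum] at hne
      obtain ⟨v, hv, hvne⟩ := Finset.exists_ne_zero_of_sum_ne_zero hne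
      rw [MvPolynomial.coeff_C_mul] at hvne
      have hc : (u (monomial v (1:R))).coeff d' ≠ 0 := fun h => hvne (by rw [h, mul_zero])
      have h1 : le d' v := (aux_monomial hlin hmul hvar g u hu v).1 d'
        (MvPolynomial.mem_support_iff.mpr hc)
      exact trans_of le h1 (hdmax v hv)
    refine ⟨?_, hbound, hcoeff⟩
    rw [MvPolynomial.mem_support_iff, hcoeff]
    exact MvPolynomial.mem_support_iff.mp hd
  refine ⟨?_, key⟩
  have hsupp : f.support.Nonempty := by
    rw [Finset.nonempty_iff_ne_empty]
    intro h
    exact hf (MvPolynomial.support_eq_empty.mp h)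
  obtain ⟨m, hm, hmax⟩ := aux_max hlin hsupp
  intro h0
  have := (key m hm hmax).1
  rw [h0] at this
  simp at this
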